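/- Optimality condition for the log-det regularized SDP: Θ* minimizes Tr(LΘ) - (1/η) log det Θ over symmetric positive definite matrices Θ with Tr(Θ) = 1 if and only if Θ* = (1/η)(L + cI)^{-1} for the unique scalar c such that L + cI is positive definite and Tr((L + cI)^{-1}) = η. -/

import Mathlib

open Matrix

namespace LogdetSDP

variable {n : ℕ}

lemma posDef_smul {A : Matrix (Fin n) (Fin n) ℝ} (hA : A.PosDef) {r : ℝ} (hr : 0 < r) :
    (r • A).PosDef := by
  refine Matrix.PosDef.of_dotProduct_mulVec_pos ?_ ?_
  · unfold Matrix.IsHermitian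
    rw [conjTranspose_smul, hA.1.eq]
    simp
  · intro x hx
    rw [smul_mulVec, dotProduct_smul, smul_eq_mul]
    exact mul_pos hr (hA.dotProduct_mulVec_pos hx)

lemma posDef_conj' {A B : Matrix (Fin n) (Fin n) ℝ} (hA : A.PosDef) (hB : IsUnit B) :
    (Bᴴ * A * B).PosDef := by
  refine Matrix.PosDef.of_dotProduct_mulVec_pos (isHermitian_conjTranspose_mul_mul B hA.1) fun x hx => ?_
  have hx' : B *ᵥ x ≠ 0 := by
    intro h
    exact hx (Matrix.mulVec_injective_iff_isUnit.mpr hB (by simpa using h))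
  simpa only [star_mulVec, dotProduct_mulVec, vecMul_vecMul] using hA.dotProduct_mulVec_pos hx'

lemma posDef_conj {A B : Matrix (Fin n) (Fin n) ℝ} (hA : A.PosDef) (hB : IsUnit B) :
    (B * A * Bᴴ).PosDef := by
  simpa only [conjTranspose_conjTranspose] using posDef_conj' hA ((isUnit_conjTranspose _).mpr hB)

end LogdetSDP

namespace LogdetSDP2
open LogdetSDP
variable {n : ℕ} {L : Matrix (Fin n) (Fin n) ℝ}

lemma shift_decomp (hL : L.IsHermitian) (c : ℝ) :
    L + c • (1 : Matrix (Fin n) (Fin n) ℝ) =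
      (hL.eigenvectorUnitary : Matrix (Fin n) (Fin n) ℝ) *
        diagonal (fun i => hL.eigenvalues i + c) *
        star (hL.eigenvectorUnitary : Matrix (Fin n) (Fin n) ℝ) := by
  set U := (hL.eigenvectorUnitary : Matrix (Fin n) (Fin n) ℝ) with hUdef
  have hU : U * star U = 1 := Matrix.mem_unitaryGroup_iff.mp hL.eigenvectorUnitary.2
  have h2 : c • (1 : Matrix (Fin n) (Fin n) ℝ) = U * (c • 1) * star U := by
    rw [mul_smul_comm, mul_one, smul_mul_assoc, hU]
  have h3 : diagonal (RCLike.ofReal ∘ hL.eigenvalues) + c • (1 : Matrix (Fin n) (Fin n) ℝ)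
      = diagonal (fun i => hL.eigenvalues i + c) := by
    ext i j
    rcases eq_or_ne i j with h | h
    · subst h; simp [Matrix.diagonal_apply_eq, Matrix.one_apply_eq, RCLike.ofReal_real_eq_id]
    · simp [Matrix.diagonal_apply_ne _ h, Matrix.one_apply_ne h]
  conv_lhs => rw [hL.spectral_theorem, Unitary.conjStarAlgAut_apply, h2]
  rw [← hUdef, ← add_mul, ← mul_add, h3]

lemma star_conj (hL : L.IsHermitian) (c : ℝ) :
    star (hL.eigenvectorUnitary : Matrix (Fin n) (Fin n) ℝ) *
      (L + c • (1 : Matrix (Fin n) (Fin n) ℝ)) *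
      (hL.eigenvectorUnitary : Matrix (Fin n) (Fin n) ℝ)
    = diagonal (fun i => hL.eigenvalues i + c) := by
  have hU : star (hL.eigenvectorUnitary : Matrix (Fin n) (Fin n) ℝ) *
      (hL.eigenvectorUnitary : Matrix (Fin n) (Fin n) ℝ) = 1 :=
    Matrix.mem_unitaryGroup_iff'.mp hL.eigenvectorUnitary.2
  rw [shift_decomp hL c]
  rw [show ∀ A B C D : Matrix (Fin n) (Fin n) ℝ, C * (A * B * D) * A = (C * A) * B * (D * A) by
    intros; noncomm_ring]
  rw [hU, one_mul, mul_one]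

lemma unitary_isUnit (hL : L.IsHermitian) :
    IsUnit (hL.eigenvectorUnitary : Matrix (Fin n) (Fin n) ℝ) := by
  have hU : (hL.eigenvectorUnitary : Matrix (Fin n) (Fin n) ℝ) *
      star (hL.eigenvectorUnitary : Matrix (Fin n) (Fin n) ℝ) = 1 :=
    Matrix.mem_unitaryGroup_iff.mp hL.eigenvectorUnitary.2
  exact ⟨Unitary.toUnits hL.eigenvectorUnitary, rfl⟩

lemma shift_posDef_iff (hL : L.IsHermitian) (c : ℝ) :
    (L + c • (1 : Matrix (Fin n) (Fin n) ℝ)).PosDef ↔ ∀ i, 0 < hL.eigenvalues i + c := by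
  rw [← Matrix.posDef_diagonal_iff (d := fun i => hL.eigenvalues i + c)]
  constructor
  · intro h
    rw [← star_conj hL c]
    have := posDef_conj' h (unitary_isUnit hL)
    simpa [star_eq_conjTranspose] using this
  · intro h
    rw [shift_decomp hL c]
    have := posDef_conj h (unitary_isUnit hL)
    simpa [star_eq_conjTranspose] using this

lemma shift_inv (hL : L.IsHermitian) (c : ℝ) (h : ∀ i, hL.eigenvalues i + c ≠ 0) :
    (L + c • (1 : Matrix (Fin n) (Fin n) ℝ))⁻¹ =
      (hL.eigenvectorUnitary : Matrix (Fin n) (Fin n) ℝ) *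
        diagonal (fun i => (hL.eigenvalues i + c)⁻¹) *
        star (hL.eigenvectorUnitary : Matrix (Fin n) (Fin n) ℝ) := by
  have hU : star (hL.eigenvectorUnitary : Matrix (Fin n) (Fin n) ℝ) *
      (hL.eigenvectorUnitary : Matrix (Fin n) (Fin n) ℝ) = 1 :=
    Matrix.mem_unitaryGroup_iff'.mp hL.eigenvectorUnitary.2
  have hUU : (hL.eigenvectorUnitary : Matrix (Fin n) (Fin n) ℝ) *
      star (hL.eigenvectorUnitary : Matrix (Fin n) (Fin n) ℝ) = 1 :=
    Matrix.mem_unitaryGroup_iff.mp hL.eigenvectorUnitary.2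
  apply Matrix.inv_eq_right_inv
  rw [shift_decomp hL c]
  rw [show ∀ A B C D E : Matrix (Fin n) (Fin n) ℝ,
      (A * B * C) * (A * D * E) = A * (B * ((C * A) * D)) * E by intros; noncomm_ring]
  rw [hU, one_mul, diagonal_mul_diagonal]
  have : (fun i => (hL.eigenvalues i + c) * (hL.eigenvalues i + c)⁻¹) = fun _ => (1:ℝ) := by
    funext i; exact mul_inv_cancel₀ (h i)
  rw [this, diagonal_one, mul_one, hUU]

lemma trace_conj_diag (hL : L.IsHermitian) (d : Fin n → ℝ) :
    ((hL.eigenvectorUnitary : Matrix (Fin n) (Fin n) ℝ) * diagonal d *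
      star (hL.eigenvectorUnitary : Matrix (Fin n) (Fin n) ℝ)).trace = ∑ i, d i := by
  have hU : star (hL.eigenvectorUnitary : Matrix (Fin n) (Fin n) ℝ) *
      (hL.eigenvectorUnitary : Matrix (Fin n) (Fin n) ℝ) = 1 :=
    Matrix.mem_unitaryGroup_iff'.mp hL.eigenvectorUnitary.2
  rw [Matrix.trace_mul_cycle, hU, one_mul, Matrix.trace_diagonal]

lemma shift_inv_trace (hL : L.IsHermitian) (c : ℝ) (h : ∀ i, hL.eigenvalues i + c ≠ 0) :
    ((L + c • (1 : Matrix (Fin n) (Fin n) ℝ))⁻¹).trace = ∑ i, (hL.eigenvalues i + c)⁻¹ := by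
  rw [shift_inv hL c h, trace_conj_diag]

end LogdetSDP2

namespace LogdetSDP3
open LogdetSDP LogdetSDP2
variable {n : ℕ}

lemma trace_eq_sum_eig {S : Matrix (Fin n) (Fin n) ℝ} (hS : S.IsHermitian) :
    S.trace = ∑ i, hS.eigenvalues i := by
  conv_lhs => rw [hS.spectral_theorem, Unitary.conjStarAlgAut_apply]
  have : (RCLike.ofReal ∘ hS.eigenvalues : Fin n → ℝ) = hS.eigenvalues := by
    funext i; simp [RCLike.ofReal_real_eq_id]
  rw [this, trace_conj_diag hS]

lemma det_eq_prod_eig {S : Matrix (Fin n) (Fin n) ℝ} (hS : S.IsHermitian) :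
    S.det = ∏ i, hS.eigenvalues i := by
  have := hS.det_eq_prod_eigenvalues
  simpa [RCLike.ofReal_real_eq_id] using this

lemma log_det_le {S : Matrix (Fin n) (Fin n) ℝ} (hS : S.PosDef) :
    Real.log S.det ≤ S.trace - n := by
  have hpos : ∀ i, 0 < hS.1.eigenvalues i := hS.eigenvalues_pos
  rw [det_eq_prod_eig hS.1, Real.log_prod (fun i _ => (hpos i).ne'),
    trace_eq_sum_eig hS.1]
  calc ∑ i, Real.log (hS.1.eigenvalues i)
      ≤ ∑ i, (hS.1.eigenvalues i - 1) :=
        Finset.sum_le_sum fun i _ => Real.log_le_sub_one_of_pos (hpos i)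
    _ = (∑ i, hS.1.eigenvalues i) - n := by
        rw [Finset.sum_sub_distrib, Finset.sum_const, Finset.card_univ]
        simp

lemma eq_one_of_log_det_eq {S : Matrix (Fin n) (Fin n) ℝ} (hS : S.PosDef)
    (h : Real.log S.det = S.trace - n) : S = 1 := by
  have hpos : ∀ i, 0 < hS.1.eigenvalues i := hS.eigenvalues_pos
  have heig : ∀ i, hS.1.eigenvalues i = 1 := by
    by_contra hne
    push_neg at hne
    obtain ⟨j, hj⟩ := hne
    have hlt : ∑ i, Real.log (hS.1.eigenvalues i) < ∑ i, (hS.1.eigenvalues i - 1) :=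
      Finset.sum_lt_sum (fun i _ => Real.log_le_sub_one_of_pos (hpos i))
        ⟨j, Finset.mem_univ j, Real.log_lt_sub_one_of_pos (hpos j) hj⟩
    have h1 : Real.log S.det = ∑ i, Real.log (hS.1.eigenvalues i) := by
      rw [det_eq_prod_eig hS.1, Real.log_prod (fun i _ => (hpos i).ne')]
    have h2 : S.trace - n = ∑ i, (hS.1.eigenvalues i - 1) := by
      rw [trace_eq_sum_eig hS.1, Finset.sum_sub_distrib, Finset.sum_const, Finset.card_univ]
      simp
    rw [h1, h2] at h
    exact absurd h hlt.ne
  have hUU : (hS.1.eigenvectorUnitary : Matrix (Fin n) (Fin n) ℝ) *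
      star (hS.1.eigenvectorUnitary : Matrix (Fin n) (Fin n) ℝ) = 1 :=
    Matrix.mem_unitaryGroup_iff.mp hS.1.eigenvectorUnitary.2
  have := hS.1.spectral_theorem
  rw [Unitary.conjStarAlgAut_apply] at this
  rw [show (RCLike.ofReal ∘ hS.1.eigenvalues : Fin n → ℝ) = fun _ => 1 by
      funext i; simp [RCLike.ofReal_real_eq_id, heig i]] at this
  rw [this]
  rw [show (diagonal (fun _ => (1:ℝ)) : Matrix (Fin n) (Fin n) ℝ) = 1 from diagonal_one]
  rw [mul_one, hUU]

end LogdetSDP3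

namespace LogdetSDP4
open LogdetSDP LogdetSDP2 LogdetSDP3

lemma key {n : ℕ} {L : Matrix (Fin n) (Fin n) ℝ} {η c : ℝ} (hη : 0 < η)
    (hc : (L + c • (1 : Matrix (Fin n) (Fin n) ℝ)).PosDef)
    (htr : ((L + c • (1 : Matrix (Fin n) (Fin n) ℝ))⁻¹).trace = η)
    {Θ : Matrix (Fin n) (Fin n) ℝ} (hΘ : Θ.PosDef) (hΘt : Θ.trace = 1) :
    ((L * ((1/η) • (L + c • (1 : Matrix (Fin n) (Fin n) ℝ))⁻¹)).trace
        - (1/η) * Real.log ((1/η) • (L + c • (1 : Matrix (Fin n) (Fin n) ℝ))⁻¹ :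
            Matrix (Fin n) (Fin n) ℝ).det
      ≤ (L * Θ).trace - (1/η) * Real.log Θ.det)
    ∧ ((L * Θ).trace - (1/η) * Real.log Θ.det ≤
        (L * ((1/η) • (L + c • (1 : Matrix (Fin n) (Fin n) ℝ))⁻¹)).trace
        - (1/η) * Real.log ((1/η) • (L + c • (1 : Matrix (Fin n) (Fin n) ℝ))⁻¹ :
            Matrix (Fin n) (Fin n) ℝ).det
      → Θ = (1/η) • (L + c • (1 : Matrix (Fin n) (Fin n) ℝ))⁻¹) := by
  set A := L + c • (1 : Matrix (Fin n) (Fin n) ℝ) with hAdef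
  have hAdet : IsUnit A.det := hc.det_pos.ne'.isUnit
  set P := η • A with hPdef
  have hP : P.PosDef := posDef_smul hc hη
  have hΘc : ((1/η) • A⁻¹) = P⁻¹ := by
    symm
    apply Matrix.inv_eq_right_inv
    rw [hPdef, Matrix.smul_mul, Matrix.mul_smul, smul_smul,
      mul_one_div_cancel hη.ne', Matrix.mul_nonsing_inv _ hAdet, one_smul]
  set R := (open scoped MatrixOrder in CFC.sqrt P) with hRdef
  have hRR : R * R = P := by
    open scoped MatrixOrder in exact CFC.sqrt_mul_sqrt_self P hP.posSemidef.nonneg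
  have hRH : Rᴴ = R := by
    open scoped MatrixOrder in exact (CFC.sqrt_nonneg P).posSemidef.1
  have hRdet : IsUnit R.det := by
    have : R.det * R.det = P.det := by rw [← Matrix.det_mul, hRR]
    have hPdet := hP.det_pos
    rcases eq_or_ne R.det 0 with h | h
    · rw [h, mul_zero] at this; exact absurd this.symm hPdet.ne'
    · exact h.isUnit
  have hRu : IsUnit R := (Matrix.isUnit_iff_isUnit_det _).mpr hRdet
  -- value formula for any feasible Θ'
  have value : ∀ Θ' : Matrix (Fin n) (Fin n) ℝ, Θ'.PosDef → Θ'.trace = 1 →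
      (L * Θ').trace - (1/η) * Real.log Θ'.det
        = (1/η) * ((R * Θ' * R).trace - Real.log (R * Θ' * R).det - n)
          + ((1/η) * n - c + (1/η) * Real.log P.det) := by
    intro Θ' hΘ' hΘ't
    have htrc : (R * Θ' * R).trace = (P * Θ').trace := by
      rw [Matrix.trace_mul_cycle, hRR]
    have hdetS : (R * Θ' * R).det = P.det * Θ'.det := by
      rw [Matrix.det_mul, Matrix.det_mul, mul_comm R.det _, mul_assoc, ← Matrix.det_mul, hRR,
        mul_comm]
    have hLΘ : (L * Θ').trace = (1/η) * (P * Θ').trace - c := by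
      have hL : L = A - c • (1 : Matrix (Fin n) (Fin n) ℝ) := by
        rw [hAdef, add_sub_cancel_right]
      have hPA : (P * Θ') = η • (A * Θ') := by rw [hPdef, Matrix.smul_mul]
      rw [hL, Matrix.sub_mul, Matrix.trace_sub, Matrix.smul_mul, Matrix.one_mul,
        Matrix.trace_smul, hΘ't, hPA, Matrix.trace_smul]
      simp only [smul_eq_mul]
      field_simp
    have hlog : Real.log Θ'.det = Real.log (R * Θ' * R).det - Real.log P.det := by
      rw [hdetS, Real.log_mul hP.det_pos.ne' hΘ'.det_pos.ne']
      ring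
    rw [hLΘ, hlog, htrc]
    ring
  -- value at Θc
  have hΘcPos : ((1/η) • A⁻¹ : Matrix (Fin n) (Fin n) ℝ).PosDef :=
    posDef_smul hc.inv (by positivity)
  have hΘcTr : ((1/η) • A⁻¹ : Matrix (Fin n) (Fin n) ℝ).trace = 1 := by
    rw [Matrix.trace_smul, htr, smul_eq_mul, one_div_mul_cancel hη.ne']
  have hSΘc : R * ((1/η) • A⁻¹) * R = 1 := by
    rw [hΘc, ← hRR, Matrix.mul_inv_rev]
    calc R * (R⁻¹ * R⁻¹) * R = (R * R⁻¹) * (R⁻¹ * R) := by noncomm_ring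
    _ = 1 := by rw [Matrix.mul_nonsing_inv _ hRdet, Matrix.nonsing_inv_mul _ hRdet, one_mul]
  have valueΘc : (L * ((1/η) • A⁻¹)).trace - (1/η) * Real.log ((1/η) • A⁻¹ :
      Matrix (Fin n) (Fin n) ℝ).det = ((1/η) * n - c + (1/η) * Real.log P.det) := by
    rw [value _ hΘcPos hΘcTr, hSΘc]
    simp [Matrix.trace_one]
  -- the S for Θ
  have hSd : (R * Θ * R).PosDef := by
    have := posDef_conj hΘ hRu
    rwa [hRH] at this
  have hgap : 0 ≤ (R * Θ * R).trace - Real.log (R * Θ * R).det - n := by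
    have := log_det_le hSd
    linarith
  constructor
  · rw [valueΘc, value Θ hΘ hΘt]
    nlinarith [one_div_pos.mpr hη]
  · intro hle
    rw [valueΘc, value Θ hΘ hΘt] at hle
    have h0 : (1/η) * ((R * Θ * R).trace - Real.log (R * Θ * R).det - n) ≤ 0 := by linarith
    have heq : Real.log (R * Θ * R).det = (R * Θ * R).trace - n := by
      have h1 : (R * Θ * R).trace - Real.log (R * Θ * R).det - n ≤ 0 := by
        by_contra hcon
        push_neg at hcon
        nlinarith [one_div_pos.mpr hη]
      linarith
    have hS1 : R * Θ * R = 1 := eq_one_of_log_det_eq hSd heq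
    have : R⁻¹ * (R * Θ * R) * R⁻¹ = Θ := by
      calc R⁻¹ * (R * Θ * R) * R⁻¹ = (R⁻¹ * R) * Θ * (R * R⁻¹) := by noncomm_ring
      _ = Θ := by rw [Matrix.nonsing_inv_mul _ hRdet, Matrix.mul_nonsing_inv _ hRdet,
            one_mul, mul_one]
    rw [hS1] at this
    rw [← this, hΘc, ← hRR, Matrix.mul_inv_rev, mul_one]

end LogdetSDP4

namespace LogdetSDP5
open LogdetSDP LogdetSDP2 LogdetSDP3

lemma exists_unique_c {n : ℕ} (hn : 0 < n) {L : Matrix (Fin n) (Fin n) ℝ} (hL : L.IsHermitian)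
    {η : ℝ} (hη : 0 < η) :
    ∃! c : ℝ, (L + c • (1 : Matrix (Fin n) (Fin n) ℝ)).PosDef ∧
      ((L + c • (1 : Matrix (Fin n) (Fin n) ℝ))⁻¹).trace = η := by
  have hne : Nonempty (Fin n) := Fin.pos_iff_nonempty.mp hn
  set μ := hL.eigenvalues with hμdef
  obtain ⟨i0, -, hi0⟩ := Finset.exists_min_image Finset.univ μ ⟨Classical.arbitrary _,
    Finset.mem_univ _⟩
  have hi0' : ∀ i, μ i0 ≤ μ i := fun i => hi0 i (Finset.mem_univ i)
  set m := μ i0 with hmdef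
  set a := -m + 1/η with hadef
  set b := -m + (n+1)/η with hbdef
  have hab : a ≤ b := by
    have h0 : (0:ℝ) ≤ n := Nat.cast_nonneg n
    have : (1:ℝ)/η ≤ (n+1)/η := by gcongr <;> linarith
    rw [hadef, hbdef]
    linarith
  have hposon : ∀ c ∈ Set.Icc a b, ∀ i, 0 < μ i + c := by
    intro c hc i
    have h1 : m + a ≤ μ i + c := add_le_add (hi0' i) hc.1
    have : m + a = 1/η := by rw [hadef]; ring
    rw [this] at h1
    linarith [one_div_pos.mpr hη]
  set g := fun c : ℝ => ∑ i, (μ i + c)⁻¹ with hgdef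
  have hcont : ContinuousOn g (Set.Icc a b) := by
    apply continuousOn_finset_sum
    intro i _
    exact ContinuousOn.inv₀ (continuousOn_const.add continuousOn_id)
      (fun c hc => (hposon c hc i).ne')
  have hga : η ≤ g a := by
    have hmem : a ∈ Set.Icc a b := ⟨le_refl _, hab⟩
    have h1 : (μ i0 + a)⁻¹ ≤ g a :=
      Finset.single_le_sum (f := fun i => (μ i + a)⁻¹)
        (fun i _ => inv_nonneg.mpr (hposon a hmem i).le) (Finset.mem_univ i0)
    have h2 : μ i0 + a = 1/η := by rw [hadef]; ring
    rw [h2, one_div, inv_inv] at h1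
    exact h1
  have hgb : g b < η := by
    have hmem : b ∈ Set.Icc a b := ⟨hab, le_refl _⟩
    have hb0 : (0:ℝ) < (n+1)/η := by positivity
    have h1 : g b ≤ ∑ _i : Fin n, ((n+1)/η)⁻¹ := by
      apply Finset.sum_le_sum
      intro i _
      have h2 : (n+1)/η ≤ μ i + b := by
        have : m + b = (n+1)/η := by rw [hbdef]; ring
        linarith [hi0' i]
      exact inv_anti₀ hb0 h2
    rw [Finset.sum_const, Finset.card_univ, Fintype.card_fin, nsmul_eq_mul] at h1
    have h4 : (n : ℝ) * ((n+1)/η)⁻¹ < η := by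
      rw [inv_div, mul_div_assoc', div_lt_iff₀ (by positivity)]
      nlinarith
    linarith
  have hsub := intermediate_value_Icc' hab hcont
  have hηmem : η ∈ Set.Icc (g b) (g a) := ⟨hgb.le, hga⟩
  obtain ⟨c, hcmem, hgc⟩ := hsub hηmem
  have hcpos : ∀ i, 0 < μ i + c := hposon c hcmem
  have mono : ∀ c1 c2 : ℝ, (∀ i, 0 < μ i + c1) → c1 < c2 → g c2 < g c1 := by
    intro c1 c2 h1 hlt
    apply Finset.sum_lt_sum_of_nonempty Finset.univ_nonempty
    intro i _
    exact inv_strictAnti₀ (h1 i) (by linarith)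
  refine ⟨c, ⟨(shift_posDef_iff hL c).mpr hcpos, ?_⟩, ?_⟩
  · rw [shift_inv_trace hL c (fun i => (hcpos i).ne')]
    exact hgc
  · rintro c' ⟨hpd', htr'⟩
    have h' : ∀ i, 0 < μ i + c' := (shift_posDef_iff hL c').mp hpd'
    have hgc' : g c' = η := by
      rw [shift_inv_trace hL c' (fun i => (h' i).ne')] at htr'
      exact htr'
    rcases lt_trichotomy c' c with h | h | h
    · have := mono c' c h' h
      rw [hgc, hgc'] at this
      exact absurd this (lt_irrefl η)
    · exact h
    · have := mono c c' hcpos h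
      rw [hgc, hgc'] at this
      exact absurd this (lt_irrefl η)

end LogdetSDP5


/-- Optimality condition for the log-det regularized SDP: `Θ*` minimizes
`Tr(LΘ) - (1/η) log det Θ` over symmetric positive definite `Θ` with
`Tr Θ = 1` if and only if `Θ* = (1/η)(L + cI)⁻¹` for the unique scalar `c`
such that `L + cI` is positive definite and `Tr((L + cI)⁻¹) = η`. -/
theorem logdet_sdp_optimality {n : ℕ}
    (L : Matrix (Fin n) (Fin n) ℝ) (hL : L.IsHermitian)
    (η : ℝ) (hη : 0 < η)
    (Θs : Matrix (Fin n) (Fin n) ℝ) (hΘs : Θs.PosDef) (hΘtr : Θs.trace = 1) :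
    (∃! c : ℝ, (L + c • (1 : Matrix (Fin n) (Fin n) ℝ)).PosDef ∧
        ((L + c • (1 : Matrix (Fin n) (Fin n) ℝ))⁻¹).trace = η) ∧
    ((∀ Θ : Matrix (Fin n) (Fin n) ℝ, Θ.PosDef → Θ.trace = 1 →
        (L * Θs).trace - (1 / η) * Real.log Θs.det ≤
          (L * Θ).trace - (1 / η) * Real.log Θ.det) ↔
      ∃ c : ℝ, (L + c • (1 : Matrix (Fin n) (Fin n) ℝ)).PosDef ∧
        ((L + c • (1 : Matrix (Fin n) (Fin n) ℝ))⁻¹).trace = η ∧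
        Θs = (1 / η) • (L + c • (1 : Matrix (Fin n) (Fin n) ℝ))⁻¹) := by
  have hn : 0 < n := by
    rcases Nat.eq_zero_or_pos n with rfl | hn
    · exfalso
      rw [Matrix.trace] at hΘtr
      simp at hΘtr
    · exact hn
  have EU := LogdetSDP5.exists_unique_c hn hL hη
  refine ⟨EU, ?_, ?_⟩
  · intro hopt
    obtain ⟨c0, ⟨hc0pd, hc0tr⟩, -⟩ := EU
    have hΘcPos : ((1/η) • (L + c0 • (1 : Matrix (Fin n) (Fin n) ℝ))⁻¹ :
        Matrix (Fin n) (Fin n) ℝ).PosDef :=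
      LogdetSDP.posDef_smul hc0pd.inv (by positivity)
    have hΘcTr : ((1/η) • (L + c0 • (1 : Matrix (Fin n) (Fin n) ℝ))⁻¹ :
        Matrix (Fin n) (Fin n) ℝ).trace = 1 := by
      rw [Matrix.trace_smul, hc0tr, smul_eq_mul, one_div_mul_cancel hη.ne']
    have hopt' := hopt _ hΘcPos hΘcTr
    exact ⟨c0, hc0pd, hc0tr, (LogdetSDP4.key hη hc0pd hc0tr hΘs hΘtr).2 hopt'⟩
  · rintro ⟨c, hcpd, hctr, hEq⟩ Θ hΘ hΘt
    rw [hEq]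
    exact (LogdetSDP4.key hη hcpd hctr hΘ hΘt).1
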